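/- For every k ∈ ℕ: Q^{k+1} ⊆ Qᵏ, P ⊆ Qᵏ, and if Qᵏ is nonempty then Qᵏ is a closed subinterval of [0,1]. -/

import Mathlib

open Classical in
/-- The decreasing sequence of sets `Qᵏ`: `Q⁰ = [0,1]` and
`Q^{k+1} = {q ∈ Qᵏ : (1−δ)·u*(q) + δ·Uᵏ(q) ≥ m(q)}`, where `Uᵏ` is the chord of `m`
from `(inf Qᵏ, m(inf Qᵏ))` to `(1, m(1))` (constant `m(1)` if `inf Qᵏ = 1`). -/
noncomputable def Qseq (m ustar : ℝ → ℝ) (δ : ℝ) : ℕ → Set ℝ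
  | 0 => Set.Icc 0 1
  | k + 1 =>
      if Qseq m ustar δ k = ∅ then (∅ : Set ℝ)
      else
        {q ∈ Qseq m ustar δ k |
          (1 - δ) * ustar q +
            δ * (if sInf (Qseq m ustar δ k) < 1 then
                ((1 - q) * m (sInf (Qseq m ustar δ k))
                  + (q - sInf (Qseq m ustar δ k)) * m 1) / (1 - sInf (Qseq m ustar δ k))
              else m 1)
          ≥ m q}

/-- for every `k`, `Q^(k+1) ⊆ Qᵏ`, `P ⊆ Qᵏ`, and a nonempty `Qᵏ` is a
closed subinterval of `[0,1]`. -/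
theorem Qseq_decreasing_contains_P_interval
    (m ustar : ℝ → ℝ) (δ : ℝ) (hδ : δ ∈ Set.Ioo (0 : ℝ) 1)
    (hconv : ConvexOn ℝ (Set.Icc (0 : ℝ) 1) m)
    (hcont : ContinuousOn m (Set.Icc (0 : ℝ) 1))
    (haff : ∀ x y t : ℝ, ustar ((1 - t) * x + t * y) = (1 - t) * ustar x + t * ustar y)
    (hle : ∀ p ∈ Set.Icc (0 : ℝ) 1, ustar p ≤ m p) :
    ∀ k : ℕ,
      Qseq m ustar δ (k + 1) ⊆ Qseq m ustar δ k ∧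
      {p ∈ Set.Icc (0 : ℝ) 1 | m p = ustar p} ⊆ Qseq m ustar δ k ∧
      ((Qseq m ustar δ k).Nonempty →
        ∃ a b : ℝ, 0 ≤ a ∧ a ≤ b ∧ b ≤ 1 ∧ Qseq m ustar δ k = Set.Icc a b) := by
  obtain ⟨hδ0, hδ1⟩ := hδ
  have hu : ∀ q : ℝ, ustar q = (1 - q) * ustar 0 + q * ustar 1 := by
    intro q
    have := haff 0 1 q
    simpa using this
  have hu1 : ustar 1 = ustar 1 := rfl
  have hcu : Continuous ustar := by
    have : ustar = fun q => (1 - q) * ustar 0 + q * ustar 1 := funext hu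
    rw [this]
    exact ((continuous_const.sub continuous_id).mul continuous_const).add
      (continuous_id.mul continuous_const)
  suffices H : ∀ k : ℕ,
      ({p ∈ Set.Icc (0 : ℝ) 1 | m p = ustar p} ⊆ Qseq m ustar δ k) ∧
      ((Qseq m ustar δ k).Nonempty →
        ∃ a b : ℝ, 0 ≤ a ∧ a ≤ b ∧ b ≤ 1 ∧ Qseq m ustar δ k = Set.Icc a b) by
    intro k
    refine ⟨?_, (H k).1, (H k).2⟩
    intro q hq
    by_cases h : Qseq m ustar δ k = ∅
    · rw [Qseq, if_pos h] at hq; exact absurd hq (by simp)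
    · rw [Qseq, if_neg h] at hq; exact hq.1
  intro k
  induction k with
  | zero =>
    refine ⟨?_, fun _ => ⟨0, 1, le_refl 0, by norm_num, le_refl 1, rfl⟩⟩
    intro p hp; exact hp.1
  | succ k ih =>
    constructor
    · -- P ⊆ Q^{k+1}
      rintro p ⟨hp01, hpm⟩
      have hpk : p ∈ Qseq m ustar δ k := ih.1 ⟨hp01, hpm⟩
      have hnek : Qseq m ustar δ k ≠ ∅ := by
        intro h; rw [h] at hpk; exact hpk
      obtain ⟨a, b, ha0, hab, hb1, hQ⟩ := ih.2 ⟨p, hpk⟩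
      have hinf : sInf (Qseq m ustar δ k) = a := by rw [hQ]; exact csInf_Icc hab
      have hap : a ≤ p ∧ p ≤ b := by rw [hQ] at hpk; exact hpk
      rw [Qseq, if_neg hnek]
      refine ⟨hpk, ?_⟩
      rw [hinf]
      by_cases hc : a < 1
      · rw [if_pos hc]
        have h1a : (0 : ℝ) < 1 - a := by linarith
        have hma : ustar a ≤ m a := hle a ⟨ha0, by linarith⟩
        have hm1 : ustar 1 ≤ m 1 := hle 1 (by norm_num)
        rw [hu a] at hma
        have key : (1 - p) * ustar 0 + p * ustar 1 ≤
            ((1 - p) * m a + (p - a) * m 1) / (1 - a) := by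
          rw [le_div_iff₀ h1a]
          nlinarith [mul_le_mul_of_nonneg_left hma (show (0:ℝ) ≤ 1 - p by linarith [hp01.2]),
            mul_le_mul_of_nonneg_left hm1 (show (0:ℝ) ≤ p - a by linarith [hap.1])]
        have hup := hu p
        rw [ge_iff_le, hpm, hup]
        nlinarith [mul_nonneg hδ0.le (sub_nonneg.mpr key)]
      · rw [if_neg hc]
        have ha1 : a = 1 := le_antisymm (by linarith) (by linarith)
        have hp1 : p = 1 := le_antisymm (by linarith [hap.2]) (by linarith [hap.1])
        subst hp1
        rw [ge_iff_le, hpm]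
        nlinarith
    · -- interval property for Q^{k+1}
      intro hne1
      have hnek : Qseq m ustar δ k ≠ ∅ := by
        intro h
        rw [Qseq, if_pos h] at hne1
        exact Set.not_nonempty_empty hne1
      obtain ⟨a, b, ha0, hab, hb1, hQ⟩ := ih.2 (Set.nonempty_iff_ne_empty.mpr hnek)
      have hinf : sInf (Qseq m ustar δ k) = a := by rw [hQ]; exact csInf_Icc hab
      set L : ℝ → ℝ := fun q => (1 - δ) * ustar q +
        δ * (if a < 1 then ((1 - q) * m a + (q - a) * m 1) / (1 - a) else m 1) with hLdef
      have hQ1 : Qseq m ustar δ (k + 1) = {q ∈ Set.Icc a b | m q ≤ L q} := by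
        rw [Qseq, if_neg hnek, hinf, hQ]
      -- concavity of L
      have hL : ConcaveOn ℝ (Set.Icc a b) L := by
        refine ⟨convex_Icc a b, ?_⟩
        intro x _ y _ s t hs ht hst
        have ht' : t = 1 - s := by linarith
        subst ht'
        simp only [smul_eq_mul]
        apply le_of_eq
        by_cases hc : a < 1
        · have h1a : (1 : ℝ) - a ≠ 0 := by intro h; apply absurd hc; push_neg; linarith
          simp only [hLdef, if_pos hc]
          rw [hu x, hu y, hu (s * x + (1 - s) * y)]
          field_simp
          ring
        · simp only [hLdef, if_neg hc]
          rw [hu x, hu y, hu (s * x + (1 - s) * y)]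
          ring
      have hm' : ConvexOn ℝ (Set.Icc a b) m :=
        hconv.subset (Set.Icc_subset_Icc ha0 hb1) (convex_Icc a b)
      have hg : ConvexOn ℝ (Set.Icc a b) (m - L) := hm'.sub hL
      have hconvS : Convex ℝ {q ∈ Set.Icc a b | m q ≤ L q} := by
        have := hg.convex_le 0
        convert this using 1
        ext q
        simp [sub_nonpos]
      have hLc : Continuous L := by
        by_cases hc : a < 1
        · simp only [hLdef, if_pos hc]
          exact (continuous_const.mul hcu).add (continuous_const.mul
            ((((continuous_const.sub continuous_id).mul continuous_const).add
              ((continuous_id.sub continuous_const).mul continuous_const)).div_const _))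
        · simp only [hLdef, if_neg hc]
          exact (continuous_const.mul hcu).add continuous_const
      have hSclosed : IsClosed {q ∈ Set.Icc a b | m q ≤ L q} := by
        have hgc : ContinuousOn (fun q => m q - L q) (Set.Icc a b) :=
          (hcont.mono (Set.Icc_subset_Icc ha0 hb1)).sub hLc.continuousOn
        have := hgc.preimage_isClosed_of_isClosed isClosed_Icc (isClosed_Iic (a := (0:ℝ)))
        convert this using 1
        ext q
        simp only [Set.mem_sep_iff, Set.mem_inter_iff, Set.mem_preimage, Set.mem_Iic,
          sub_nonpos]
      set S := {q ∈ Set.Icc a b | m q ≤ L q} with hSdef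
      have hS_ne : S.Nonempty := by rw [← hQ1]; exact hne1
      have hSsub : S ⊆ Set.Icc a b := fun q hq => hq.1
      have bddB : BddBelow S := (bddBelow_Icc (a := b) (b := a)).mono hSsub
      have bddA : BddAbove S := (bddAbove_Icc (a := a) (b := b)).mono hSsub
      have ha' : sInf S ∈ S := hSclosed.csInf_mem hS_ne bddB
      have hb' : sSup S ∈ S := hSclosed.csSup_mem hS_ne bddA
      refine ⟨sInf S, sSup S, le_trans ha0 (ha'.1.1), csInf_le_csSup hS_ne bddB bddA,
        le_trans (hb'.1.2) hb1, ?_⟩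
      rw [hQ1]
      apply Set.Subset.antisymm
      · intro x hx
        exact ⟨csInf_le bddB hx, le_csSup bddA hx⟩
      · exact hconvS.ordConnected.out ha' hb'
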